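/- For a finite irreducible Markov chain with generator L and stationary measure μ, the function V = S^{-1} L* f satisfies: Ψ_V is the orthogonal projection of Φ_f onto the space of gradient flows, and ⟨Ψ_V, Ψ_V⟩ = ⟨V, (−S)V⟩_μ = ⟨L*f, (−S)^{-1} L*f⟩_μ. -/

import Mathlib

open Finset

/-- The generator associated to jump rates `q`: `(L f)(x) = ∑ y, q x y * (f y - f x)`. -/
noncomputable def Ld {E : Type*} [Fintype E] (q : E → E → ℝ) (f : E → ℝ) (x : E) : ℝ :=
  ∑ y, q x y * (f y - f x)

/-- The adjoint jump rates: `r* x y = μ y * r y x / μ x`. -/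
noncomputable def adjRates {E : Type*} (r : E → E → ℝ) (μ : E → ℝ) : E → E → ℝ :=
  fun x y => μ y * r y x / μ x

/-- The symmetric part of the generator: `S = (L + L*) / 2`. -/
noncomputable def symOp {E : Type*} [Fintype E] (r : E → E → ℝ) (μ : E → ℝ)
    (f : E → ℝ) (x : E) : ℝ :=
  (Ld r f x + Ld (adjRates r μ) f x) / 2

private lemma sum_antisym {E : Type*} [Fintype E] (P : E → E → ℝ)
    (hP : ∀ x y, P y x = - P x y) (g : E → ℝ) :
    ∑ x, ∑ y, P x y * (g x - g y) = 2 * ∑ x, g x * ∑ y, P x y := by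
  have key : ∑ x : E, ∑ y, -(P x y * g y) = ∑ x : E, ∑ y, P x y * g x := by
    rw [Finset.sum_comm]
    refine Finset.sum_congr rfl fun x _ => Finset.sum_congr rfl fun y _ => ?_
    rw [hP]; ring
  calc ∑ x : E, ∑ y, P x y * (g x - g y)
      = ∑ x : E, ∑ y, (P x y * g x + -(P x y * g y)) := by
        refine Finset.sum_congr rfl fun x _ => Finset.sum_congr rfl fun y _ => ?_; ring
    _ = ∑ x : E, ∑ y, P x y * g x + ∑ x : E, ∑ y, -(P x y * g y) := by
        rw [← Finset.sum_add_distrib]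
        exact Finset.sum_congr rfl fun x _ => Finset.sum_add_distrib
    _ = 2 * ∑ x, g x * ∑ y, P x y := by
        rw [key, Finset.mul_sum, ← Finset.sum_add_distrib]
        refine Finset.sum_congr rfl fun x _ => ?_
        rw [Finset.mul_sum, Finset.mul_sum, ← Finset.sum_add_distrib]
        exact Finset.sum_congr rfl fun y _ => by ring

theorem projection_of_phi_on_gradient_flows {E : Type*} [Fintype E]
    (r : E → E → ℝ) (μ : E → ℝ) (cs : E → E → ℝ)
    (hr : ∀ x y, 0 ≤ r x y) (hrdiag : ∀ x, r x x = 0)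
    (hμ : ∀ x, 0 < μ x)
    (hstat : ∀ y, ∑ x, μ x * r x y = μ y * ∑ x, r y x)
    (hirr : ∀ h : E → ℝ,
      (∀ x y, 0 < μ x * r x y + μ y * r y x → h x = h y) → ∀ x y, h x = h y)
    (hcs : ∀ x y, cs x y = (μ x * r x y + μ y * r y x) / 2)
    (f V : E → ℝ)
    (hV : ∀ x, symOp r μ V x = Ld (adjRates r μ) f x) :
    (∀ g : E → ℝ,
      (1 / 2) * ∑ x, ∑ y,
        (f x * (μ x * r x y) - f y * (μ y * r y x) - cs x y * (V x - V y)) *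
          (cs x y * (g x - g y)) / cs x y = 0) ∧
    (1 / 2) * ∑ x, ∑ y, (cs x y * (V x - V y)) * (cs x y * (V x - V y)) / cs x y =
      ∑ x, μ x * V x * (-(symOp r μ V x)) ∧
    ∑ x, μ x * V x * (-(symOp r μ V x)) =
      ∑ x, μ x * Ld (adjRates r μ) f x * (-V x) := by
  -- if cs x y = 0 then both rates vanish
  have hcs0 : ∀ x y, cs x y = 0 → μ x * r x y = 0 ∧ μ y * r y x = 0 := by
    intro x y h
    have ha : 0 ≤ μ x * r x y := mul_nonneg (hμ x).le (hr x y)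
    have hb : 0 ≤ μ y * r y x := mul_nonneg (hμ y).le (hr y x)
    rw [hcs] at h
    constructor <;> nlinarith
  -- μ x * (L* W) x as a sum
  have hμadj : ∀ (W : E → ℝ) (x : E),
      μ x * Ld (adjRates r μ) W x = ∑ y, μ y * r y x * (W y - W x) := by
    intro W x
    rw [Ld, Finset.mul_sum]
    refine Finset.sum_congr rfl fun y _ => ?_
    unfold adjRates
    rw [div_mul_eq_mul_div, mul_div_cancel₀ _ (hμ x).ne']
  have hμL : ∀ (W : E → ℝ) (x : E),
      μ x * Ld r W x = ∑ y, μ x * r x y * (W y - W x) := by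
    intro W x
    rw [Ld, Finset.mul_sum]
    exact Finset.sum_congr rfl fun y _ => by ring
  -- key lemma A
  have hA : ∀ (W : E → ℝ) (x : E),
      ∑ y, cs x y * (W x - W y) = -(μ x * symOp r μ W x) := by
    intro W x
    have h2 : (2:ℝ) * ∑ y, cs x y * (W x - W y)
        = -(μ x * Ld r W x) + -(μ x * Ld (adjRates r μ) W x) := by
      rw [hμL, hμadj, Finset.mul_sum, ← Finset.sum_neg_distrib, ← Finset.sum_neg_distrib,
        ← Finset.sum_add_distrib]
      exact Finset.sum_congr rfl fun y _ => by rw [hcs]; ring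
    rw [symOp]; linarith
  -- key lemma B (uses stationarity)
  have hB : ∀ x, ∑ y, (f x * (μ x * r x y) - f y * (μ y * r y x))
      = -(μ x * Ld (adjRates r μ) f x) := by
    intro x
    have hst : ∑ y, μ y * r y x = μ x * ∑ y, r x y := hstat x
    have e1 : ∑ y, f x * (μ x * r x y) = f x * (μ x * ∑ y, r x y) := by
      rw [Finset.mul_sum, Finset.mul_sum]
    rw [Finset.sum_sub_distrib, e1, ← hst, hμadj, Finset.mul_sum,
      ← Finset.sum_sub_distrib, ← Finset.sum_neg_distrib]
    exact Finset.sum_congr rfl fun y _ => by ring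
  refine ⟨?_, ?_, ?_⟩
  · intro g
    have hdiv : ∀ x y,
        (f x * (μ x * r x y) - f y * (μ y * r y x) - cs x y * (V x - V y)) *
          (cs x y * (g x - g y)) / cs x y
        = (f x * (μ x * r x y) - f y * (μ y * r y x) - cs x y * (V x - V y)) * (g x - g y) := by
      intro x y
      by_cases h : cs x y = 0
      · obtain ⟨ha, hb⟩ := hcs0 x y h
        rw [h, ha, hb]; simp
      · field_simp
    have hre : ∑ x : E, ∑ y,
        (f x * (μ x * r x y) - f y * (μ y * r y x) - cs x y * (V x - V y)) *
          (cs x y * (g x - g y)) / cs x y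
        = ∑ x : E, ∑ y,
        (f x * (μ x * r x y) - f y * (μ y * r y x) - cs x y * (V x - V y)) * (g x - g y) :=
      Finset.sum_congr rfl fun x _ => Finset.sum_congr rfl fun y _ => hdiv x y
    rw [hre, sum_antisym _ (fun x y => by rw [hcs x y, hcs y x]; ring) g]
    have hin : ∀ x : E,
        ∑ y, (f x * (μ x * r x y) - f y * (μ y * r y x) - cs x y * (V x - V y)) = 0 := by
      intro x
      have : ∑ y, (f x * (μ x * r x y) - f y * (μ y * r y x) - cs x y * (V x - V y))
          = (∑ y, (f x * (μ x * r x y) - f y * (μ y * r y x)))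
            - ∑ y, cs x y * (V x - V y) := Finset.sum_sub_distrib _ _
      rw [this, hB, hA, hV x]; ring
    simp [hin]
  · have hdiv : ∀ x y, (cs x y * (V x - V y)) * (cs x y * (V x - V y)) / cs x y
        = (cs x y * (V x - V y)) * (V x - V y) := by
      intro x y
      by_cases h : cs x y = 0
      · rw [h]; simp
      · field_simp
    have hre : ∑ x : E, ∑ y, (cs x y * (V x - V y)) * (cs x y * (V x - V y)) / cs x y
        = ∑ x : E, ∑ y, (cs x y * (V x - V y)) * (V x - V y) :=
      Finset.sum_congr rfl fun x _ => Finset.sum_congr rfl fun y _ => hdiv x y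
    rw [hre, sum_antisym _ (fun x y => by rw [hcs x y, hcs y x]; ring) V]
    rw [show ∑ x : E, V x * ∑ y, cs x y * (V x - V y)
        = ∑ x : E, μ x * V x * (-(symOp r μ V x)) from
      Finset.sum_congr rfl fun x _ => by rw [hA]; ring]
    ring
  · exact Finset.sum_congr rfl fun x _ => by rw [hV x]; ring
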